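/- arXiv:1106.5858 — 3 statements merged into one kernel-verified Lean document; each statement's English description precedes it below -/
import Mathlib

section
/- Let d ≥ 1 be an integer and let μ : (0,∞) → [0,∞) be completely monotone (infinitely differentiable with (−1)ⁿ μ⁽ⁿ⁾(t) ≥ 0 for all integers n ≥ 0 and t > 0), not identically zero, with ∫₀^∞ min(t,1) μ(t) dt < ∞. Assume that for every K > 0 there exists c = c(K) > 1 such that μ(r) ≤ c μ(2r) for all r ∈ (0, K). Define j(r) := ∫₀^∞ (4πt)^{-d/2} e^{-r²/(4t)} μ(t) dt for r > 0. Then for every K > 0 there exists a constant C = C(K) > 1 such that j(r) ≤ C j(2r) for all r ∈ (0, K). -/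
open MeasureTheory Real Set

lemma lk_cont (d : ℕ) (μ : ℝ → ℝ) (hcont : ContinuousOn μ (Ioi 0)) (r : ℝ) :
    ContinuousOn
      (fun t : ℝ => (4 * π * t) ^ (-(d : ℝ) / 2) * Real.exp (-(r ^ 2) / (4 * t)) * μ t)
      (Ioi 0) := by
  apply ContinuousOn.mul _ hcont
  apply ContinuousOn.mul
  · apply ContinuousOn.rpow_const (continuous_const.mul continuous_id).continuousOn
    intro t ht
    have ht' : (0:ℝ) < t := ht
    left; exact (by positivity : (0:ℝ) < 4 * π * t).ne'
  · exact Real.continuous_exp.comp_continuousOn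
      (ContinuousOn.div continuousOn_const (continuous_const.mul continuous_id).continuousOn
        (fun t ht => by have ht' : (0:ℝ) < t := ht; positivity))

lemma lk_nonneg (d : ℕ) (μ : ℝ → ℝ) (hnn : ∀ t ∈ Ioi (0:ℝ), 0 ≤ μ t) (r : ℝ)
    {t : ℝ} (ht : t ∈ Ioi (0:ℝ)) :
    0 ≤ (4 * π * t) ^ (-(d : ℝ) / 2) * Real.exp (-(r ^ 2) / (4 * t)) * μ t := by
  have ht' : (0:ℝ) < t := ht
  exact mul_nonneg (mul_nonneg (Real.rpow_nonneg (by positivity) _) (Real.exp_nonneg _))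
    (hnn t ht)

lemma lk_integrable (d : ℕ) (μ : ℝ → ℝ) (hcont : ContinuousOn μ (Ioi 0))
    (hnn : ∀ t ∈ Ioi (0:ℝ), 0 ≤ μ t)
    (hint : IntegrableOn (fun t => min t 1 * μ t) (Ioi 0))
    {r : ℝ} (hr : 0 < r) :
    IntegrableOn
      (fun t : ℝ => (4 * π * t) ^ (-(d : ℝ) / 2) * Real.exp (-(r ^ 2) / (4 * t)) * μ t)
      (Ioi 0) := by
  set C0 : ℝ := (4 * π) ^ (-(d : ℝ) / 2) *
    ((Nat.factorial (d+1) : ℝ) * 4 ^ (d+1) / r ^ (2*(d+1))) with hC0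
  have hC0nn : 0 ≤ C0 := by
    have := Real.rpow_nonneg (show (0:ℝ) ≤ 4 * π by positivity) (-(d:ℝ)/2)
    positivity
  set M : ℝ := C0 + 1 with hM
  have hMnn : (0:ℝ) ≤ M := by positivity
  apply Integrable.mono' (g := fun t => M * (min t 1 * μ t)) (hint.const_mul M)
  · exact (lk_cont d μ hcont r).aestronglyMeasurable measurableSet_Ioi
  · rw [ae_restrict_iff' measurableSet_Ioi]
    filter_upwards with t ht
    have ht' : (0:ℝ) < t := ht
    rw [Real.norm_eq_abs, abs_of_nonneg (lk_nonneg d μ hnn r ht)]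
    have hμt := hnn t ht
    have key : (4 * π * t) ^ (-(d : ℝ) / 2) * Real.exp (-(r ^ 2) / (4 * t)) ≤ M * min t 1 := by
      rcases le_or_gt 1 t with h1 | h1
      · rw [min_eq_right h1]
        have h4 : (1:ℝ) ≤ 4 * π * t := by nlinarith [Real.pi_gt_three]
        have hle : (4 * π * t) ^ (-(d : ℝ) / 2) ≤ 1 :=
          Real.rpow_le_one_of_one_le_of_nonpos h4 (by rw [neg_div, neg_nonpos]; positivity)
        have hexp : Real.exp (-(r ^ 2) / (4 * t)) ≤ 1 := by
          rw [Real.exp_le_one_iff, neg_div, neg_nonpos]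
          positivity
        calc (4 * π * t) ^ (-(d : ℝ) / 2) * Real.exp (-(r ^ 2) / (4 * t))
            ≤ 1 * 1 := mul_le_mul hle hexp (Real.exp_nonneg _) (by norm_num)
          _ ≤ M * 1 := by
              have : (1:ℝ) ≤ M := by simp only [hM]; linarith
              linarith
      · rw [min_eq_left h1.le]
        have hexp : Real.exp (-(r ^ 2) / (4 * t))
            ≤ (Nat.factorial (d+1) : ℝ) * (4*t) ^ (d+1) / r ^ (2*(d+1)) := by
          have hx0 : (0:ℝ) < r ^ 2 / (4 * t) := by positivity
          have hF : (0:ℝ) < (Nat.factorial (d+1) : ℝ) := by positivity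
          have hp := Real.pow_div_factorial_le_exp (r ^ 2 / (4 * t)) hx0.le (d+1)
          have hb : (0:ℝ) < (r ^ 2 / (4 * t)) ^ (d+1) / (Nat.factorial (d+1) : ℝ) := by
            positivity
          have h2 : (Real.exp (r ^ 2 / (4 * t)))⁻¹
              ≤ ((r ^ 2 / (4 * t)) ^ (d+1) / (Nat.factorial (d+1) : ℝ))⁻¹ :=
            inv_anti₀ hb hp
          rw [neg_div, Real.exp_neg]
          refine h2.trans (le_of_eq ?_)
          have hrne : r ≠ 0 := ne_of_gt hr
          have h4tne : (4 * t : ℝ) ≠ 0 := by positivity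
          rw [div_pow, pow_mul]
          field_simp
        have hsplit : (4 * π * t) ^ (-(d : ℝ) / 2)
            = (4 * π) ^ (-(d : ℝ) / 2) * t ^ (-(d : ℝ) / 2) := by
          exact Real.mul_rpow (by positivity) ht'.le
        have main : (4 * π * t) ^ (-(d : ℝ) / 2) * Real.exp (-(r ^ 2) / (4 * t))
            ≤ C0 * (t ^ (-(d : ℝ) / 2) * t ^ (d+1)) := by
          rw [hsplit, hC0]
          have h1' : (0:ℝ) ≤ (4*π) ^ (-(d : ℝ) / 2) := Real.rpow_nonneg (by positivity) _
          have h2' : (0:ℝ) ≤ t ^ (-(d : ℝ) / 2) := Real.rpow_nonneg ht'.le _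
          calc (4*π) ^ (-(d : ℝ) / 2) * t ^ (-(d : ℝ) / 2) * Real.exp (-(r ^ 2) / (4 * t))
              ≤ (4*π) ^ (-(d : ℝ) / 2) * t ^ (-(d : ℝ) / 2) *
                ((Nat.factorial (d+1) : ℝ) * (4*t) ^ (d+1) / r ^ (2*(d+1))) :=
                mul_le_mul_of_nonneg_left hexp (by positivity)
            _ = (4*π) ^ (-(d:ℝ)/2) * ((Nat.factorial (d+1) : ℝ) * 4 ^ (d+1) / r ^ (2*(d+1)))
                * (t ^ (-(d : ℝ) / 2) * t ^ (d+1)) := by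
                rw [mul_pow]; ring
        have hrpow : t ^ (-(d : ℝ) / 2) * t ^ (d+1) ≤ t := by
          have heq : t ^ (-(d : ℝ) / 2) * t ^ (d+1) = t ^ (-(d : ℝ) / 2 + (d+1 : ℕ)) := by
            rw [← Real.rpow_natCast t (d+1), ← Real.rpow_add ht']
          rw [heq]
          have hexp1 : -(d : ℝ) / 2 + (d+1 : ℕ) = 1 + ((d:ℝ)/2) := by push_cast; ring
          rw [hexp1, Real.rpow_add ht', Real.rpow_one]
          have : t ^ ((d:ℝ)/2) ≤ 1 :=
            Real.rpow_le_one ht'.le h1.le (by positivity)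
          nlinarith [this, ht']
        calc (4 * π * t) ^ (-(d : ℝ) / 2) * Real.exp (-(r ^ 2) / (4 * t))
            ≤ C0 * (t ^ (-(d : ℝ) / 2) * t ^ (d+1)) := main
          _ ≤ C0 * t := mul_le_mul_of_nonneg_left hrpow hC0nn
          _ ≤ M * t := by
              apply mul_le_mul_of_nonneg_right _ ht'.le
              simp only [hM]; linarith
    calc (4 * π * t) ^ (-(d : ℝ) / 2) * Real.exp (-(r ^ 2) / (4 * t)) * μ t
        ≤ (M * min t 1) * μ t := mul_le_mul_of_nonneg_right key hμt
      _ = M * (min t 1 * μ t) := by ring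

/-- If `μ` is completely monotone (not identically zero) on `(0,∞)` with
`∫₀^∞ min(t,1) μ(t) dt < ∞` and satisfies the doubling condition `μ(r) ≤ c(K) μ(2r)` on
every interval `(0,K)`, then the kernel `j(r) = ∫₀^∞ (4πt)^{-d/2} e^{-r²/(4t)} μ(t) dt`
satisfies the doubling condition `j(r) ≤ C(K) j(2r)` on every interval `(0,K)`. -/
theorem levy_kernel_doubling_near_zero
    (d : ℕ) (hd : 1 ≤ d) (μ : ℝ → ℝ)
    (hsmooth : ContDiffOn ℝ (⊤ : ℕ∞) μ (Ioi 0))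
    (hsign : ∀ (n : ℕ) (t : ℝ), 0 < t →
      0 ≤ (-1 : ℝ) ^ n * iteratedDerivWithin n μ (Ioi 0) t)
    (hne : ∃ t > (0 : ℝ), μ t ≠ 0)
    (hint : IntegrableOn (fun t => min t 1 * μ t) (Ioi 0))
    (hdbl : ∀ K > (0 : ℝ), ∃ c > (1 : ℝ), ∀ r ∈ Ioo (0 : ℝ) K, μ r ≤ c * μ (2 * r))
    (j : ℝ → ℝ)
    (hj : ∀ r : ℝ, j r =
      ∫ t in Ioi (0 : ℝ), (4 * π * t) ^ (-(d : ℝ) / 2) * Real.exp (-(r ^ 2) / (4 * t)) * μ t) :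
    ∀ K > (0 : ℝ), ∃ C > (1 : ℝ), ∀ r ∈ Ioo (0 : ℝ) K, j r ≤ C * j (2 * r) := by
  have hcont : ContinuousOn μ (Ioi 0) := hsmooth.continuousOn
  have hnn : ∀ t ∈ Ioi (0:ℝ), 0 ≤ μ t := by
    intro t ht
    have h := hsign 0 t ht
    simpa [iteratedDerivWithin_zero] using h
  obtain ⟨c, hc1, hcd⟩ := hdbl (1/2) (by norm_num)
  have hc0 : (0:ℝ) < c := by linarith
  intro K hK
  set g : ℝ → ℝ → ℝ :=
    fun r t => (4 * π * t) ^ (-(d : ℝ) / 2) * Real.exp (-(r ^ 2) / (4 * t)) * μ t with hg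
  set C : ℝ := c ^ 2 * (4:ℝ) ^ ((d:ℝ)/2) / 4 + Real.exp (3 * K ^ 2) with hC
  have h4pos : (0:ℝ) < (4:ℝ) ^ ((d:ℝ)/2) := Real.rpow_pos_of_pos (by norm_num) _
  have hCgt : 1 < C := by
    have h1 : (1:ℝ) ≤ Real.exp (3 * K ^ 2) := Real.one_le_exp (by positivity)
    have h2 : (0:ℝ) < c ^ 2 * (4:ℝ) ^ ((d:ℝ)/2) / 4 := by positivity
    simp only [hC]; linarith
  refine ⟨C, hCgt, ?_⟩
  rintro r ⟨hr0, hrK⟩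
  have h2r : (0:ℝ) < 2 * r := by linarith
  have hgr := lk_integrable d μ hcont hnn hint hr0
  have hg2r := lk_integrable d μ hcont hnn hint h2r
  have hJnn : 0 ≤ ∫ t in Ioi (0:ℝ), g (2*r) t :=
    setIntegral_nonneg measurableSet_Ioi (fun t ht => lk_nonneg d μ hnn (2*r) ht)
  have hcomp : IntegrableOn (fun s => g (2*r) (4*s)) (Ioi (0:ℝ)) := by
    rw [integrableOn_Ioi_comp_mul_left_iff (g (2*r)) 0 (by norm_num : (0:ℝ) < 4)]
    simpa using hg2r
  -- pointwise bound on Ioo 0 (1/4)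
  have hpt1 : ∀ s ∈ Ioo (0:ℝ) (1/4),
      g r s ≤ c ^ 2 * (4:ℝ) ^ ((d:ℝ)/2) * g (2*r) (4*s) := by
    rintro s ⟨hs0, hs4⟩
    have hμ1 : μ s ≤ c * μ (2*s) := hcd s ⟨hs0, by linarith⟩
    have hμ2 : μ (2*s) ≤ c * μ (2*(2*s)) := hcd (2*s) ⟨by linarith, by linarith⟩
    have hμ4 : μ s ≤ c^2 * μ (4*s) := by
      have h22 : (2:ℝ)*(2*s) = 4*s := by ring
      rw [h22] at hμ2
      nlinarith [hμ1, hμ2, hc0]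
    have hpre : (0:ℝ) ≤ (4 * π * s) ^ (-(d : ℝ) / 2) * Real.exp (-(r ^ 2) / (4 * s)) :=
      mul_nonneg (Real.rpow_nonneg (by positivity) _) (Real.exp_nonneg _)
    have hkey : g (2*r) (4*s) =
        (4:ℝ) ^ (-(d:ℝ)/2) * ((4 * π * s) ^ (-(d : ℝ) / 2) * Real.exp (-(r ^ 2) / (4 * s)))
          * μ (4*s) := by
      simp only [hg]
      have e1 : (4 * π * (4*s)) ^ (-(d : ℝ) / 2)
          = (4:ℝ) ^ (-(d:ℝ)/2) * (4 * π * s) ^ (-(d : ℝ) / 2) := by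
        have h44s : 4 * π * (4*s) = 4 * (4 * π * s) := by ring
        rw [h44s, Real.mul_rpow (by norm_num) (by positivity)]
      have e2 : -((2*r) ^ 2) / (4 * (4*s)) = -(r ^ 2) / (4 * s) := by
        rw [div_eq_div_iff (by positivity) (by positivity)]
        ring
      rw [e1, e2]; ring
    have h44 : (4:ℝ) ^ ((d:ℝ)/2) * (4:ℝ) ^ (-(d:ℝ)/2) = 1 := by
      rw [← Real.rpow_add (by norm_num : (0:ℝ) < 4),
        show (d:ℝ)/2 + -(d:ℝ)/2 = 0 by ring, Real.rpow_zero]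
    have step : g r s ≤ (c^2 * μ (4*s)) *
        ((4 * π * s) ^ (-(d : ℝ) / 2) * Real.exp (-(r ^ 2) / (4 * s))) := by
      simp only [hg]
      calc (4 * π * s) ^ (-(d : ℝ) / 2) * Real.exp (-(r ^ 2) / (4 * s)) * μ s
          ≤ (4 * π * s) ^ (-(d : ℝ) / 2) * Real.exp (-(r ^ 2) / (4 * s)) * (c^2 * μ (4*s)) :=
            mul_le_mul_of_nonneg_left hμ4 hpre
        _ = (c^2 * μ (4*s)) * ((4 * π * s) ^ (-(d : ℝ) / 2) * Real.exp (-(r ^ 2) / (4 * s))) := by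
            ring
    have hkey' : (4:ℝ) ^ ((d:ℝ)/2) * g (2*r) (4*s)
        = ((4 * π * s) ^ (-(d : ℝ) / 2) * Real.exp (-(r ^ 2) / (4 * s))) * μ (4*s) := by
      rw [hkey, show (4:ℝ) ^ ((d:ℝ)/2) * ((4:ℝ) ^ (-(d:ℝ)/2) *
          ((4 * π * s) ^ (-(d : ℝ) / 2) * Real.exp (-(r ^ 2) / (4 * s))) * μ (4*s))
          = ((4:ℝ) ^ ((d:ℝ)/2) * (4:ℝ) ^ (-(d:ℝ)/2)) *
            (((4 * π * s) ^ (-(d : ℝ) / 2) * Real.exp (-(r ^ 2) / (4 * s))) * μ (4*s)) from by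
          ring, h44, one_mul]
    calc g r s ≤ (c^2 * μ (4*s)) *
          ((4 * π * s) ^ (-(d : ℝ) / 2) * Real.exp (-(r ^ 2) / (4 * s))) := step
      _ = c ^ 2 * (((4 * π * s) ^ (-(d : ℝ) / 2) * Real.exp (-(r ^ 2) / (4 * s))) * μ (4*s)) := by
          ring
      _ = c ^ 2 * ((4:ℝ) ^ ((d:ℝ)/2) * g (2*r) (4*s)) := by rw [hkey']
      _ = c ^ 2 * (4:ℝ) ^ ((d:ℝ)/2) * g (2*r) (4*s) := by ring
  -- pointwise bound on Ici (1/4)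
  have hpt2 : ∀ t ∈ Ici (1/4 : ℝ), g r t ≤ Real.exp (3 * K ^ 2) * g (2*r) t := by
    intro t ht
    have ht0 : (0:ℝ) < t := lt_of_lt_of_le (by norm_num) ht
    have hexp : Real.exp (-(r ^ 2) / (4 * t)) ≤
        Real.exp (3 * K ^ 2) * Real.exp (-((2*r) ^ 2) / (4 * t)) := by
      rw [← Real.exp_add, Real.exp_le_exp]
      have h14 : (1/4:ℝ) ≤ t := ht
      have h4t : (1:ℝ) ≤ 4 * t := by linarith
      have hr2 : r ^ 2 ≤ K ^ 2 := by nlinarith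
      have hdiv : 3 * r ^ 2 / (4 * t) ≤ 3 * r ^ 2 := div_le_self (by positivity) h4t
      have heq : -(r ^ 2) / (4 * t) - (-((2*r) ^ 2) / (4 * t)) = 3 * r ^ 2 / (4*t) := by
        field_simp; ring
      nlinarith [hdiv, hr2, heq]
    simp only [hg]
    calc (4 * π * t) ^ (-(d : ℝ) / 2) * Real.exp (-(r ^ 2) / (4 * t)) * μ t
        ≤ (4 * π * t) ^ (-(d : ℝ) / 2) *
          (Real.exp (3 * K ^ 2) * Real.exp (-((2*r) ^ 2) / (4 * t))) * μ t := by
          apply mul_le_mul_of_nonneg_right _ (hnn t ht0)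
          exact mul_le_mul_of_nonneg_left hexp (Real.rpow_nonneg (by positivity) _)
      _ = Real.exp (3 * K ^ 2) *
          ((4 * π * t) ^ (-(d : ℝ) / 2) * Real.exp (-((2*r) ^ 2) / (4 * t)) * μ t) := by ring
  -- split the integral
  have hsplit : Ioi (0:ℝ) = Ioo 0 (1/4) ∪ Ici (1/4) :=
    (Ioo_union_Ici_eq_Ioi (by norm_num : (0:ℝ) < 1/4)).symm
  have hdisj : Disjoint (Ioo (0:ℝ) (1/4)) (Ici (1/4)) := by
    apply Set.disjoint_left.mpr
    rintro x ⟨_, hx2⟩ hx3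
    exact absurd hx3 (not_le.mpr hx2)
  have hjr : j r = (∫ t in Ioo (0:ℝ) (1/4), g r t) + ∫ t in Ici (1/4 : ℝ), g r t := by
    rw [hj r, ← setIntegral_union hdisj measurableSet_Ici
      (hgr.mono_set (by rw [hsplit]; exact subset_union_left))
      (hgr.mono_set (by rw [hsplit]; exact subset_union_right)), ← hsplit]
  -- bound piece 1
  have hI1 : (∫ t in Ioo (0:ℝ) (1/4), g r t)
      ≤ c ^ 2 * (4:ℝ) ^ ((d:ℝ)/2) / 4 * ∫ t in Ioi (0:ℝ), g (2*r) t := by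
    have hsub : Ioo (0:ℝ) (1/4) ⊆ Ioi 0 := fun x hx => hx.1
    have step1 : (∫ t in Ioo (0:ℝ) (1/4), g r t)
        ≤ ∫ s in Ioo (0:ℝ) (1/4), c ^ 2 * (4:ℝ) ^ ((d:ℝ)/2) * g (2*r) (4*s) :=
      setIntegral_mono_on (hgr.mono_set hsub)
        ((hcomp.mono_set hsub).const_mul _) measurableSet_Ioo hpt1
    have step2 : (∫ s in Ioo (0:ℝ) (1/4), c ^ 2 * (4:ℝ) ^ ((d:ℝ)/2) * g (2*r) (4*s))
        = c ^ 2 * (4:ℝ) ^ ((d:ℝ)/2) * ∫ s in Ioo (0:ℝ) (1/4), g (2*r) (4*s) :=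
      integral_const_mul _ _
    have step3 : (∫ s in Ioo (0:ℝ) (1/4), g (2*r) (4*s))
        ≤ ∫ s in Ioi (0:ℝ), g (2*r) (4*s) := by
      apply setIntegral_mono_set hcomp
      · filter_upwards [ae_restrict_mem measurableSet_Ioi] with s hs
        have h4s : (4*s : ℝ) ∈ Ioi (0:ℝ) := by
          have hs' : (0:ℝ) < s := hs
          simp only [mem_Ioi]; linarith
        exact lk_nonneg d μ hnn (2*r) h4s
      · exact HasSubset.Subset.eventuallyLE hsub
    have step4 : (∫ s in Ioi (0:ℝ), g (2*r) (4*s))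
        = (4:ℝ)⁻¹ * ∫ t in Ioi (0:ℝ), g (2*r) t := by
      rw [integral_comp_mul_left_Ioi (g (2*r)) 0 (by norm_num : (0:ℝ) < 4)]
      norm_num
    calc (∫ t in Ioo (0:ℝ) (1/4), g r t)
        ≤ c ^ 2 * (4:ℝ) ^ ((d:ℝ)/2) * ∫ s in Ioo (0:ℝ) (1/4), g (2*r) (4*s) := by
          rw [← step2]; exact step1
      _ ≤ c ^ 2 * (4:ℝ) ^ ((d:ℝ)/2) * ((4:ℝ)⁻¹ * ∫ t in Ioi (0:ℝ), g (2*r) t) := by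
          rw [← step4]
          exact mul_le_mul_of_nonneg_left step3 (by positivity)
      _ = c ^ 2 * (4:ℝ) ^ ((d:ℝ)/2) / 4 * ∫ t in Ioi (0:ℝ), g (2*r) t := by ring
  -- bound piece 2
  have hI2 : (∫ t in Ici (1/4 : ℝ), g r t)
      ≤ Real.exp (3 * K ^ 2) * ∫ t in Ioi (0:ℝ), g (2*r) t := by
    have hsub : Ici (1/4 : ℝ) ⊆ Ioi 0 := fun x hx => lt_of_lt_of_le (by norm_num : (0:ℝ) < 1/4) hx
    have step1 : (∫ t in Ici (1/4 : ℝ), g r t)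
        ≤ ∫ t in Ici (1/4 : ℝ), Real.exp (3 * K ^ 2) * g (2*r) t :=
      setIntegral_mono_on (hgr.mono_set hsub)
        ((hg2r.mono_set hsub).const_mul _) measurableSet_Ici hpt2
    have step2 : (∫ t in Ici (1/4 : ℝ), Real.exp (3 * K ^ 2) * g (2*r) t)
        = Real.exp (3 * K ^ 2) * ∫ t in Ici (1/4 : ℝ), g (2*r) t := integral_const_mul _ _
    have step3 : (∫ t in Ici (1/4 : ℝ), g (2*r) t) ≤ ∫ t in Ioi (0:ℝ), g (2*r) t := by
      apply setIntegral_mono_set hg2r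
      · filter_upwards [ae_restrict_mem measurableSet_Ioi] with t ht
        exact lk_nonneg d μ hnn (2*r) ht
      · exact HasSubset.Subset.eventuallyLE hsub
    calc (∫ t in Ici (1/4 : ℝ), g r t)
        ≤ Real.exp (3 * K ^ 2) * ∫ t in Ici (1/4 : ℝ), g (2*r) t := by
          rw [← step2]; exact step1
      _ ≤ Real.exp (3 * K ^ 2) * ∫ t in Ioi (0:ℝ), g (2*r) t :=
          mul_le_mul_of_nonneg_left step3 (Real.exp_nonneg _)
  have hj2r : j (2*r) = ∫ t in Ioi (0:ℝ), g (2*r) t := hj (2*r)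
  rw [hjr, hj2r, hC]
  nlinarith [hI1, hI2, hJnn]
end

section
/- Let d ≥ 2, R > 0, and let D ⊆ ℝ^d be an open set such that the open ball of radius R centered at (0̃, R) is contained in D and the open ball of radius R centered at (0̃, −R) is contained in ℝ^d ∖ D. Write δ_D(z) := dist(z, ℝ^d ∖ D), fix 0 < x_d < R, set x := (0̃, x_d), and let e be any unit vector in ℝ^d orthogonal to the d-th coordinate vector e_d. Then: (i) δ_D(x) = x_d; (ii) for every ε ∈ ℝ, R − √(ε² + (R − x_d)²) − x_d ≤ δ_D(x + εe) − δ_D(x) ≤ √(ε² + (R + x_d)²) − R − x_d; (iii) lim_{ε→0} (δ_D(x + εe) − δ_D(x))/ε = 0; (iv) if moreover x_d ≤ R/4, then |δ_D(x + εe) + δ_D(x − εe) − 2 δ_D(x)| ≤ (4/(3R)) ε² for every ε ∈ ℝ. -/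
open Set

section Aux

lemma sqrt_add_sq_le (t a : ℝ) (ha : 0 < a) :
    Real.sqrt (t ^ 2 + a ^ 2) ≤ a + t ^ 2 / (2 * a) := by
  have h : t ^ 2 + a ^ 2 ≤ (a + t ^ 2 / (2 * a)) ^ 2 := by
    have h2 : 0 ≤ (t ^ 2 / (2 * a)) ^ 2 := by positivity
    have : (a + t ^ 2 / (2 * a)) ^ 2 = a ^ 2 + t ^ 2 + (t ^ 2 / (2 * a)) ^ 2 := by
      field_simp; ring
    nlinarith
  calc Real.sqrt (t ^ 2 + a ^ 2) ≤ Real.sqrt ((a + t ^ 2 / (2 * a)) ^ 2) :=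
        Real.sqrt_le_sqrt h
    _ = a + t ^ 2 / (2 * a) := Real.sqrt_sq (by positivity)

lemma le_sqrt_add_sq (t a : ℝ) (ha : 0 ≤ a) : a ≤ Real.sqrt (t ^ 2 + a ^ 2) := by
  calc a = Real.sqrt (a ^ 2) := (Real.sqrt_sq ha).symm
    _ ≤ Real.sqrt (t ^ 2 + a ^ 2) := Real.sqrt_le_sqrt (by nlinarith [sq_nonneg t])

end Aux

/-- Suppose the open set `D` contains the ball of radius `R` centred at
`(0̃, R)` and its complement contains the ball of radius `R` centred at `(0̃, -R)`.
Let `δ_D(z) = dist(z, Dᶜ)`, `x = (0̃, x_d)` with `0 < x_d < R`, and let `e = (ẽ, 0)` be a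
unit vector orthogonal to the `d`-th coordinate direction. Then
(i) `δ_D(x) = x_d`;
(ii) `R - √(ε² + (R-x_d)²) - x_d ≤ δ_D(x+εe) - δ_D(x) ≤ √(ε² + (R+x_d)²) - R - x_d`;
(iii) `lim_{ε→0} (δ_D(x+εe) - δ_D(x))/ε = 0`;
(iv) if `x_d ≤ R/4`, then `|δ_D(x+εe) + δ_D(x-εe) - 2δ_D(x)| ≤ (4/(3R)) ε²`.
Here `ℝ^d` is modelled as the `L²`-product `ℝ^{d-1} ×₂ ℝ`. -/
theorem dist_to_boundary_tangential_regularity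
    (d : ℕ) (hd : 2 ≤ d) (R : ℝ) (hR : 0 < R)
    (D : Set (WithLp 2 (EuclideanSpace ℝ (Fin (d - 1)) × ℝ))) (hDopen : IsOpen D)
    (hIntBall :
      Metric.ball ((WithLp.equiv 2 (EuclideanSpace ℝ (Fin (d - 1)) × ℝ)).symm (0, R)) R ⊆ D)
    (hExtBall :
      Metric.ball ((WithLp.equiv 2 (EuclideanSpace ℝ (Fin (d - 1)) × ℝ)).symm (0, -R)) R ⊆ Dᶜ)
    (xd : ℝ) (hxd0 : 0 < xd) (hxdR : xd < R)
    (x : WithLp 2 (EuclideanSpace ℝ (Fin (d - 1)) × ℝ))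
    (hx : x = (WithLp.equiv 2 (EuclideanSpace ℝ (Fin (d - 1)) × ℝ)).symm (0, xd))
    (et : EuclideanSpace ℝ (Fin (d - 1))) (het : ‖et‖ = 1)
    (e : WithLp 2 (EuclideanSpace ℝ (Fin (d - 1)) × ℝ))
    (he : e = (WithLp.equiv 2 (EuclideanSpace ℝ (Fin (d - 1)) × ℝ)).symm (et, 0)) :
    Metric.infDist x Dᶜ = xd ∧
    (∀ ε : ℝ,
      R - Real.sqrt (ε ^ 2 + (R - xd) ^ 2) - xd
          ≤ Metric.infDist (x + ε • e) Dᶜ - Metric.infDist x Dᶜ ∧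
      Metric.infDist (x + ε • e) Dᶜ - Metric.infDist x Dᶜ
          ≤ Real.sqrt (ε ^ 2 + (R + xd) ^ 2) - R - xd) ∧
    Filter.Tendsto (fun ε : ℝ => (Metric.infDist (x + ε • e) Dᶜ - Metric.infDist x Dᶜ) / ε)
      (nhdsWithin 0 {0}ᶜ) (nhds 0) ∧
    (xd ≤ R / 4 → ∀ ε : ℝ,
      |Metric.infDist (x + ε • e) Dᶜ + Metric.infDist (x - ε • e) Dᶜ
          - 2 * Metric.infDist x Dᶜ| ≤ (4 / (3 * R)) * ε ^ 2) := by
  have hDc_closed : IsClosed Dᶜ := hDopen.isClosed_compl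
  set cp := (WithLp.equiv 2 (EuclideanSpace ℝ (Fin (d - 1)) × ℝ)).symm (0, R) with hcp
  set cm := (WithLp.equiv 2 (EuclideanSpace ℝ (Fin (d - 1)) × ℝ)).symm (0, -R) with hcm
  have hcm_mem : cm ∈ Dᶜ := hExtBall (Metric.mem_ball_self hR)
  have hne : (Dᶜ : Set _).Nonempty := ⟨cm, hcm_mem⟩
  -- general lower bound
  have hlow0 : ∀ z, R - dist z cp ≤ Metric.infDist z Dᶜ := by
    intro z
    by_contra h
    push_neg at h
    rw [Metric.infDist_lt_iff hne] at h
    obtain ⟨y, hy, hlt⟩ := h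
    have hycp : dist y cp < R := by
      have := dist_triangle y z cp
      rw [dist_comm y z] at this
      linarith
    exact hy (hIntBall (by simpa [Metric.mem_ball] using hycp))
  -- general upper bound
  have hup0 : ∀ z, R ≤ dist z cm → Metric.infDist z Dᶜ ≤ dist z cm - R := by
    intro z hz
    set r := dist z cm with hr
    have hrpos : 0 < r := lt_of_lt_of_le hR hz
    set w := cm + (R / r) • (z - cm) with hw
    have hwD : w ∈ Dᶜ := by
      have h1 : w ∈ Metric.closedBall cm R := by
        rw [Metric.mem_closedBall, dist_eq_norm]
        have hwc : w - cm = (R / r) • (z - cm) := by rw [hw]; abel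
        rw [hwc, norm_smul, Real.norm_eq_abs, abs_of_pos (by positivity),
          ← dist_eq_norm, ← hr]
        rw [div_mul_cancel₀ _ hrpos.ne']
      have hsub : Metric.closedBall cm R ⊆ Dᶜ := by
        rw [← closure_ball cm hR.ne']
        exact hDc_closed.closure_subset_iff.mpr hExtBall
      exact hsub h1
    calc Metric.infDist z Dᶜ ≤ dist z w := Metric.infDist_le_dist_of_mem hwD
      _ = r - R := by
          rw [dist_eq_norm]
          have hzw : z - w = (1 - R / r) • (z - cm) := by
            rw [hw, sub_smul, one_smul]; abel
          rw [hzw, norm_smul, Real.norm_eq_abs,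
            abs_of_nonneg (by rw [sub_nonneg, div_le_one hrpos]; exact hz),
            ← dist_eq_norm, ← hr]
          field_simp
  -- explicit points
  have hxe : ∀ ε : ℝ, x + ε • e =
      (WithLp.equiv 2 (EuclideanSpace ℝ (Fin (d - 1)) × ℝ)).symm (ε • et, xd) := by
    intro ε
    rw [hx, he, WithLp.equiv_symm_apply, ← WithLp.toLp_smul, ← WithLp.toLp_add]
    congr 1
    simp [Prod.ext_iff]
  -- distance computations
  have hdisteuc : ∀ ε : ℝ, dist (ε • et) (0 : EuclideanSpace ℝ (Fin (d - 1))) ^ 2 = ε ^ 2 := by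
    intro ε
    rw [dist_zero_right, norm_smul, Real.norm_eq_abs, het, mul_one, sq_abs]
  have hdcp : ∀ ε : ℝ, dist (x + ε • e) cp = Real.sqrt (ε ^ 2 + (R - xd) ^ 2) := by
    intro ε
    rw [hxe, hcp, WithLp.prod_dist_eq_of_L2]
    simp only [WithLp.equiv_symm_apply, WithLp.toLp_fst, WithLp.toLp_snd]
    rw [hdisteuc]
    congr 2
    rw [Real.dist_eq, abs_of_nonpos (by linarith)]
    ring
  have hdcm : ∀ ε : ℝ, dist (x + ε • e) cm = Real.sqrt (ε ^ 2 + (R + xd) ^ 2) := by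
    intro ε
    rw [hxe, hcm, WithLp.prod_dist_eq_of_L2]
    simp only [WithLp.equiv_symm_apply, WithLp.toLp_fst, WithLp.toLp_snd]
    rw [hdisteuc]
    congr 2
    rw [Real.dist_eq, abs_of_nonneg (by linarith)]
    ring
  have hRm : 0 < R - xd := by linarith
  have hRp : 0 < R + xd := by linarith
  -- bounds for perturbed points
  have hlow : ∀ ε : ℝ, R - Real.sqrt (ε ^ 2 + (R - xd) ^ 2)
      ≤ Metric.infDist (x + ε • e) Dᶜ := by
    intro ε; have := hlow0 (x + ε • e); rwa [hdcp] at this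
  have hup : ∀ ε : ℝ, Metric.infDist (x + ε • e) Dᶜ
      ≤ Real.sqrt (ε ^ 2 + (R + xd) ^ 2) - R := by
    intro ε
    have hge : R ≤ dist (x + ε • e) cm := by
      rw [hdcm]
      have := le_sqrt_add_sq ε (R + xd) hRp.le
      linarith
    have := hup0 (x + ε • e) hge
    rwa [hdcm] at this
  -- (i)
  have hfx : Metric.infDist x Dᶜ = xd := by
    have hx0 : x = x + (0 : ℝ) • e := by simp
    have h1 := hlow 0
    have h2 := hup 0
    rw [← hx0] at h1 h2
    have e1 : Real.sqrt ((0:ℝ) ^ 2 + (R - xd) ^ 2) = R - xd := by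
      rw [← Real.sqrt_sq hRm.le]; norm_num
    have e2 : Real.sqrt ((0:ℝ) ^ 2 + (R + xd) ^ 2) = R + xd := by
      rw [← Real.sqrt_sq hRp.le]; norm_num
    rw [e1] at h1; rw [e2] at h2
    linarith
  -- central absolute bound
  have hb : ∀ ε : ℝ, |Metric.infDist (x + ε • e) Dᶜ - xd| ≤ ε ^ 2 / (2 * (R - xd)) := by
    intro ε
    have h1 := hlow ε
    have h2 := hup ε
    have l1 := sqrt_add_sq_le ε (R - xd) hRm
    have l2 := sqrt_add_sq_le ε (R + xd) hRp
    have l3 : ε ^ 2 / (2 * (R + xd)) ≤ ε ^ 2 / (2 * (R - xd)) := by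
      gcongr <;> linarith [sq_nonneg ε]
    rw [abs_le]
    constructor <;> linarith
  refine ⟨hfx, ?_, ?_, ?_⟩
  · intro ε
    have h1 := hlow ε
    have h2 := hup ε
    rw [hfx]
    constructor <;> linarith
  · -- (iii)
    apply squeeze_zero_norm' (a := fun ε : ℝ => |ε| / (2 * (R - xd)))
    · filter_upwards [self_mem_nhdsWithin] with ε (hε : ε ∈ ({0}ᶜ : Set ℝ))
      have hεne : ε ≠ 0 := hε
      have hεpos : 0 < |ε| := abs_pos.mpr hεne
      rw [hfx, Real.norm_eq_abs, abs_div]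
      have hb' := hb ε
      have heq : ε ^ 2 / (2 * (R - xd)) / |ε| = |ε| / (2 * (R - xd)) := by
        field_simp
        rw [← sq_abs ε]
      calc |Metric.infDist (x + ε • e) Dᶜ - xd| / |ε|
          ≤ ε ^ 2 / (2 * (R - xd)) / |ε| := by gcongr
        _ = |ε| / (2 * (R - xd)) := heq
    · have : Filter.Tendsto (fun ε : ℝ => |ε| / (2 * (R - xd))) (nhds 0) (nhds 0) := by
        have := (continuous_abs.tendsto (0 : ℝ)).div_const (2 * (R - xd))
        simpa using this
      exact this.mono_left nhdsWithin_le_nhds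
  · -- (iv)
    intro hx4 ε
    have h1 := hb ε
    have h2 := hb (-ε)
    rw [neg_pow, neg_one_sq, one_mul] at h2
    have hsub : x - ε • e = x + (-ε) • e := by rw [neg_smul, ← sub_eq_add_neg]
    rw [hsub, hfx]
    set A := Metric.infDist (x + ε • e) Dᶜ
    set B := Metric.infDist (x + (-ε) • e) Dᶜ
    have hkey : |A + B - 2 * xd| ≤ ε ^ 2 / (R - xd) := by
      have habs : |A + B - 2 * xd| ≤ |A - xd| + |B - xd| := by
        have := abs_add_le (A - xd) (B - xd)
        have heq : A - xd + (B - xd) = A + B - 2 * xd := by ring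
        rwa [heq] at this
      have : ε ^ 2 / (2 * (R - xd)) + ε ^ 2 / (2 * (R - xd)) = ε ^ 2 / (R - xd) := by
        field_simp; ring
      linarith
    have hfinal : ε ^ 2 / (R - xd) ≤ 4 / (3 * R) * ε ^ 2 := by
      rw [div_le_iff₀ hRm]
      have h3 : (1 : ℝ) ≤ 4 / (3 * R) * (R - xd) := by
        rw [div_mul_eq_mul_div, le_div_iff₀ (by linarith)]
        linarith
      nlinarith [sq_nonneg ε]
    linarith
end

section
/- Let d ≥ 2 and 0 < r₁ ≤ 1/2. Define D := (−100, 100)^d ∖ ((−100, 49]^{d−1} × [−1/2, 0]) ⊆ ℝ^d, and for an integer n ≥ 2 define C_n := {x = (x̃, x_d) ∈ D : |x̃| ≤ 2^{−n−3} r₁ and x_d ≤ −1 + 2^{−n} r₁²} and D_n := {y = (ỹ, y_d) ∈ D : y_d > 0 and there exists x ∈ C_n with |x − y| < 1}. Then D_n ⊆ {(ỹ, y_d) : |ỹ| ≤ (2^{−n−3} + 2^{−(n−1)/2}) r₁ and 0 < y_d ≤ 2^{−n} r₁²}, and the latter set is contained in the closed ball of radius r₁ centered at the origin. -/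
open Set

set_option maxHeartbeats 1000000 in
/-- With `D = (-100,100)^d \ ((-100,49]^{d-1} × [-1/2,0])`,
`C_n = {x ∈ D : |x̃| ≤ 2^{-n-3} r₁, x_d ≤ -1 + 2^{-n} r₁²}` and
`D_n = {y ∈ D : y_d > 0, ∃ x ∈ C_n, |x - y| < 1}`, one has
`D_n ⊆ {y : |ỹ| ≤ (2^{-n-3} + 2^{-(n-1)/2}) r₁, 0 < y_d ≤ 2^{-n} r₁²}` and the latter set
is contained in the closed ball of radius `r₁` about the origin.
Here `ℝ^d` is modelled as the `L²`-product `ℝ^{d-1} ×₂ ℝ`. -/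
theorem counterexample_hitting_set_inclusion
    (d : ℕ) (hd : 2 ≤ d) (r₁ : ℝ) (hr₁0 : 0 < r₁) (hr₁ : r₁ ≤ 1 / 2)
    (n : ℕ) (hn : 2 ≤ n)
    (D Cn Dn : Set (WithLp 2 (EuclideanSpace ℝ (Fin (d - 1)) × ℝ)))
    (hD : D =
      {y | (∀ i, ((WithLp.equiv 2 _) y).1 i ∈ Ioo (-100 : ℝ) 100) ∧
            ((WithLp.equiv 2 _) y).2 ∈ Ioo (-100 : ℝ) 100} \
      {y | (∀ i, ((WithLp.equiv 2 _) y).1 i ∈ Ioc (-100 : ℝ) 49) ∧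
            ((WithLp.equiv 2 _) y).2 ∈ Icc (-(1 / 2) : ℝ) 0})
    (hCn : Cn = {x ∈ D | ‖((WithLp.equiv 2 _) x).1‖ ≤ (2 : ℝ) ^ (-(n : ℝ) - 3) * r₁ ∧
            ((WithLp.equiv 2 _) x).2 ≤ -1 + (2 : ℝ) ^ (-(n : ℝ)) * r₁ ^ 2})
    (hDn : Dn = {y ∈ D | 0 < ((WithLp.equiv 2 _) y).2 ∧ ∃ x ∈ Cn, dist x y < 1}) :
    Dn ⊆ {y | ‖((WithLp.equiv 2 _) y).1‖
              ≤ ((2 : ℝ) ^ (-(n : ℝ) - 3) + (2 : ℝ) ^ (-((n : ℝ) - 1) / 2)) * r₁ ∧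
            0 < ((WithLp.equiv 2 _) y).2 ∧
            ((WithLp.equiv 2 _) y).2 ≤ (2 : ℝ) ^ (-(n : ℝ)) * r₁ ^ 2} ∧
    {y : WithLp 2 (EuclideanSpace ℝ (Fin (d - 1)) × ℝ) |
        ‖((WithLp.equiv 2 _) y).1‖
            ≤ ((2 : ℝ) ^ (-(n : ℝ) - 3) + (2 : ℝ) ^ (-((n : ℝ) - 1) / 2)) * r₁ ∧
          0 < ((WithLp.equiv 2 _) y).2 ∧
          ((WithLp.equiv 2 _) y).2 ≤ (2 : ℝ) ^ (-(n : ℝ)) * r₁ ^ 2}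
      ⊆ Metric.closedBall 0 r₁ := by
  -- abbreviations
  set a : ℝ := (2 : ℝ) ^ (-(n : ℝ)) with ha
  set b : ℝ := (2 : ℝ) ^ (-(n : ℝ) - 3) with hb
  set c : ℝ := (2 : ℝ) ^ (-((n : ℝ) - 1) / 2) with hc
  have hn2 : (2 : ℝ) ≤ (n : ℝ) := by exact_mod_cast hn
  have ha0 : 0 < a := Real.rpow_pos_of_pos (by norm_num) _
  have hb0 : 0 < b := Real.rpow_pos_of_pos (by norm_num) _
  have hc0 : 0 < c := Real.rpow_pos_of_pos (by norm_num) _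
  have hval : ∀ z : ℤ, (2 : ℝ) ^ ((z : ℝ)) = (2 : ℝ) ^ z := by
    intro z; rw [Real.rpow_intCast]
  have hale : a ≤ 1 / 4 := by
    have : a ≤ (2 : ℝ) ^ ((-2 : ℤ) : ℝ) := by
      apply Real.rpow_le_rpow_of_exponent_le one_le_two
      push_cast; linarith
    rw [hval] at this; norm_num at this; linarith
  have hble : b ≤ 1 / 32 := by
    have : b ≤ (2 : ℝ) ^ ((-5 : ℤ) : ℝ) := by
      apply Real.rpow_le_rpow_of_exponent_le one_le_two
      push_cast; linarith
    rw [hval] at this; norm_num at this; linarith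
  have hcsq : c ^ 2 = 2 * a := by
    rw [hc, ← Real.rpow_natCast ((2:ℝ) ^ (-((n : ℝ) - 1) / 2)) 2, ← Real.rpow_mul (by norm_num)]
    rw [ha, show (-((n : ℝ) - 1) / 2 * (2 : ℕ)) = 1 + -(n : ℝ) by push_cast; ring,
      Real.rpow_add (by norm_num), Real.rpow_one]
  have hcle : c ≤ 3 / 4 := by nlinarith
  have har : a * r₁ ^ 2 ≤ 1 / 16 := by nlinarith
  have key : Dn ⊆ {y | ‖((WithLp.equiv 2 _) y).1‖ ≤ (b + c) * r₁ ∧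
      0 < ((WithLp.equiv 2 _) y).2 ∧ ((WithLp.equiv 2 _) y).2 ≤ a * r₁ ^ 2} := by
    intro y hy
    rw [hDn] at hy
    obtain ⟨hyD, hy2, x, hxCn, hdxy⟩ := hy
    rw [hCn] at hxCn
    obtain ⟨hxD, hx1, hx2⟩ := hxCn
    simp only [WithLp.equiv_apply, WithLp.ofLp_fst, WithLp.ofLp_snd] at hx1 hx2 hy2 ⊢
    have hdist := WithLp.prod_dist_eq_of_L2 x y
    have h0 : (0:ℝ) ≤ dist x.fst y.fst ^ 2 + dist x.snd y.snd ^ 2 := by positivity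
    have hsum : dist x.fst y.fst ^ 2 + dist x.snd y.snd ^ 2 < 1 := by
      rw [hdist] at hdxy
      have hs := Real.sq_sqrt h0
      have hs0 := Real.sqrt_nonneg (dist x.fst y.fst ^ 2 + dist x.snd y.snd ^ 2)
      nlinarith
    have hd2 : y.snd - x.snd ≤ dist x.snd y.snd := by
      rw [Real.dist_eq, abs_sub_comm]
      exact le_abs_self _
    have hd2' : dist x.snd y.snd < 1 := by
      nlinarith [(dist_nonneg : (0:ℝ) ≤ dist x.fst y.fst), (dist_nonneg : (0:ℝ) ≤ dist x.snd y.snd)]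
    constructor
    · -- first component bound
      have hlow : 1 - a * r₁ ^ 2 ≤ y.snd - x.snd := by
        linarith
      have hdd : 1 - a * r₁ ^ 2 ≤ dist x.snd y.snd := le_trans hlow hd2
      have heps : (0:ℝ) ≤ a * r₁ ^ 2 := by positivity
      have hd2sq : (1 - a * r₁ ^ 2) ^ 2 ≤ dist x.snd y.snd ^ 2 := by
        have h1 : (0:ℝ) ≤ dist x.snd y.snd - (1 - a * r₁ ^ 2) := by linarith
        have h2 : (0:ℝ) ≤ dist x.snd y.snd + (1 - a * r₁ ^ 2) := by linarith
        have h3 := mul_nonneg h1 h2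
        have hid : (dist x.snd y.snd - (1 - a * r₁ ^ 2)) * (dist x.snd y.snd + (1 - a * r₁ ^ 2))
            = dist x.snd y.snd ^ 2 - (1 - a * r₁ ^ 2) ^ 2 := by ring
        rw [hid] at h3
        linarith
      have hcr : (c * r₁) ^ 2 = 2 * (a * r₁ ^ 2) := by rw [mul_pow, hcsq]; ring
      have hexp : (1 - a * r₁ ^ 2) ^ 2 = 1 - 2 * (a * r₁ ^ 2) + (a * r₁ ^ 2) ^ 2 := by ring
      have hd1 : dist x.fst y.fst ^ 2 ≤ (c * r₁) ^ 2 := by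
        have hsq0 : (0:ℝ) ≤ (a * r₁ ^ 2) ^ 2 := sq_nonneg _
        linarith
      have hd1' : dist x.fst y.fst ≤ c * r₁ := by
        have h := Real.sqrt_le_sqrt hd1
        rwa [Real.sqrt_sq dist_nonneg, Real.sqrt_sq (le_of_lt (mul_pos hc0 hr₁0))] at h
      have htri : ‖y.fst‖ ≤ ‖x.fst‖ + dist x.fst y.fst := by
        have := dist_triangle y.fst x.fst 0
        rw [dist_zero_right, dist_zero_right, dist_comm y.fst x.fst] at this
        linarith
      have : (b + c) * r₁ = b * r₁ + c * r₁ := by ring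
      linarith
    · refine ⟨hy2, ?_⟩
      linarith
  constructor
  · intro y hy
    obtain ⟨h1, h2, h3⟩ := key hy
    exact ⟨h1, h2, h3⟩
  · intro y hy
    obtain ⟨h1, h2, h3⟩ := hy
    simp only [WithLp.equiv_apply, WithLp.ofLp_fst, WithLp.ofLp_snd] at h1 h2 h3
    clear key hD hCn hDn hval
    rw [Metric.mem_closedBall, dist_zero_right]
    have hnsq := WithLp.prod_norm_sq_eq_of_L2 y
    have hy2n : ‖y.snd‖ = y.snd := by rw [Real.norm_eq_abs, abs_of_pos h2]
    have hb1 : ‖y.fst‖ ≤ (25 / 32) * r₁ :=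
      h1.trans (mul_le_mul_of_nonneg_right (by linarith) hr₁0.le)
    have hb2 : y.snd ≤ r₁ / 8 := by
      have e1 := mul_le_mul_of_nonneg_right hale (sq_nonneg r₁)
      have e2 : r₁ ^ 2 ≤ r₁ / 2 := by
        have e3 := mul_le_mul_of_nonneg_left hr₁ hr₁0.le
        have e4 : r₁ ^ 2 = r₁ * r₁ := by ring
        linarith
      linarith
    have hsq : ‖y‖ ^ 2 ≤ r₁ ^ 2 := by
      rw [hnsq, hy2n]
      have q1 : ‖y.fst‖ ^ 2 ≤ (25 / 32 * r₁) ^ 2 := pow_le_pow_left₀ (norm_nonneg _) hb1 2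
      have q2 : y.snd ^ 2 ≤ (r₁ / 8) ^ 2 := pow_le_pow_left₀ h2.le hb2 2
      have q3 : (25 / 32 * r₁) ^ 2 + (r₁ / 8) ^ 2 ≤ r₁ ^ 2 := by
        have e5 : (25 / 32 * r₁) ^ 2 + (r₁ / 8) ^ 2 = 641 / 1024 * r₁ ^ 2 := by ring
        have e6 : (0:ℝ) ≤ r₁ ^ 2 := sq_nonneg r₁
        linarith
      linarith
    have h := Real.sqrt_le_sqrt hsq
    rwa [Real.sqrt_sq (norm_nonneg y), Real.sqrt_sq (le_of_lt hr₁0)] at h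
end
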